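/- Let γ_1, …, γ_m be real numbers and set Γ_m(x) = γ_1 x^{m−1} + γ_2 x^{m−2} + ⋯ + γ_{m−1} x + γ_m. If Γ_m(r) > 0, then there exists a real polynomial p(x), divisible by P(x), and an integer N ≥ m − 1, such that the coefficient of x^{N−i+1} in p equals γ_i for 1 ≤ i ≤ m, the coefficient of x^j in p is ≤ 0 for every j ≤ N − m, and the coefficient of x^j in p is 0 for every j > N. -/

import Mathlib

open Polynomial Finset

noncomputable def zaSeq (k : ℕ) (c : ℕ → ℕ) (g : ℕ → ℝ) : ℕ → ℝ
  | s => g s + ∑ i ∈ Finset.Icc 1 k,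
      if _h : 1 ≤ i ∧ i ≤ s then (c i : ℝ) * zaSeq k c g (s - i) else 0
  termination_by s => s
  decreasing_by omega

lemma zaSeq_eq (k : ℕ) (c : ℕ → ℕ) (g : ℕ → ℝ) (s : ℕ) :
    zaSeq k c g s = g s + ∑ i ∈ Finset.Icc 1 k,
      if _h : 1 ≤ i ∧ i ≤ s then (c i : ℝ) * zaSeq k c g (s - i) else 0 := by
  rw [zaSeq]

lemma zaSeq_low (k : ℕ) (c : ℕ → ℕ) (g : ℕ → ℝ) (hg : ∀ s < k, g s = 0)
    (s : ℕ) (hs : s < k) : zaSeq k c g s = 0 := by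
  induction s using Nat.strong_induction_on with
  | _ s ih =>
    rw [zaSeq_eq, hg s hs, zero_add]
    apply Finset.sum_eq_zero
    intro i hi
    rw [Finset.mem_Icc] at hi
    split_ifs with h
    · rw [ih (s - i) (by omega) (by omega), mul_zero]
    · rfl

lemma zaSeq_rec (k : ℕ) (c : ℕ → ℕ) (g : ℕ → ℝ) (s : ℕ) (hs : k ≤ s) :
    zaSeq k c g s = g s + ∑ i ∈ Finset.Icc 1 k, (c i : ℝ) * zaSeq k c g (s - i) := by
  rw [zaSeq_eq]
  congr 1
  apply Finset.sum_congr rfl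
  intro i hi
  rw [Finset.mem_Icc] at hi
  rw [dif_pos ⟨hi.1, by omega⟩]

def ZRep (S : Finset ℕ) (t : ℕ) : Prop :=
  ∃ l : List ℕ, (∀ x ∈ l, x ∈ S) ∧ l.sum = t

lemma zrep_add {S : Finset ℕ} {a b : ℕ} (ha : ZRep S a) (hb : ZRep S b) : ZRep S (a + b) := by
  obtain ⟨l1, h1, e1⟩ := ha
  obtain ⟨l2, h2, e2⟩ := hb
  exact ⟨l1 ++ l2, by intro x hx; rcases List.mem_append.1 hx with h | h; exacts [h1 x h, h2 x h],
    by simp [e1, e2]⟩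

lemma zrep_zero (S : Finset ℕ) : ZRep S 0 := ⟨[], by simp, rfl⟩

lemma zrep_mem {S : Finset ℕ} {s : ℕ} (hs : s ∈ S) : ZRep S s := ⟨[s], by simp [hs], by simp⟩

lemma zrep_nsmul {S : Finset ℕ} {a : ℕ} (ha : ZRep S a) (n : ℕ) : ZRep S (n * a) := by
  induction n with
  | zero => simpa using zrep_zero S
  | succ n ih => have := zrep_add ih ha; rwa [Nat.succ_mul]

lemma exists_frobenius (S : Finset ℕ) (hS : S.Nonempty) (h1 : ∀ s ∈ S, 1 ≤ s)
    (hgcd : S.gcd id = 1) :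
    ∃ F : ℕ, ∀ t, F ≤ t → ZRep S t := by
  classical
  set P : ℕ → Prop := fun gg => 0 < gg ∧ ∃ a b, ZRep S a ∧ ZRep S b ∧ a = b + gg with hP
  obtain ⟨s0, hs0⟩ := hS
  have hPex : ∃ gg, P gg := ⟨s0, h1 s0 hs0, s0, 0, zrep_mem hs0, zrep_zero S, by omega⟩
  set g := Nat.find hPex with hgdef
  obtain ⟨hgpos, a0, b0, ha0, hb0, hab0⟩ : P g := Nat.find_spec hPex
  have hdvd : ∀ s ∈ S, g ∣ s := by
    intro s hs
    by_contra hnd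
    set ρ := s % g with hρ
    have hρpos : 0 < ρ := by
      rcases Nat.eq_zero_or_pos ρ with h | h
      · exact absurd (Nat.dvd_of_mod_eq_zero h) hnd
      · exact h
    have hρlt : ρ < g := Nat.mod_lt _ hgpos
    set q := s / g with hq
    have hsq : q * g + ρ = s := by rw [mul_comm]; exact Nat.div_add_mod s g
    have key : s + q * b0 = q * a0 + ρ := by
      have h2 : q * a0 = q * b0 + q * g := by rw [hab0]; ring
      omega
    have : P ρ := ⟨hρpos, s + q * b0, q * a0,
      zrep_add (zrep_mem hs) (zrep_nsmul hb0 q), zrep_nsmul ha0 q, key⟩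
    exact Nat.find_min hPex hρlt this
  have hg1 : g = 1 := by
    have : g ∣ S.gcd id := Finset.dvd_gcd fun s hs => hdvd s hs
    rw [hgcd] at this
    exact Nat.dvd_one.1 this
  rw [hg1] at hab0
  rcases Nat.eq_zero_or_pos b0 with hb | hb
  · refine ⟨0, fun t _ => ?_⟩
    have h1r : ZRep S 1 := by rw [hb, zero_add] at hab0; rwa [hab0] at ha0
    have := zrep_nsmul h1r t
    simpa using this
  · refine ⟨b0 * b0, fun t ht => ?_⟩
    have hylt : t % b0 < b0 := Nat.mod_lt _ hb
    have hqb : b0 ≤ t / b0 := (Nat.le_div_iff_mul_le hb).2 ht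
    set u := t % b0 with hu
    obtain ⟨x, hxq⟩ := Nat.le.dest (hylt.le.trans hqb)
    have hdm : b0 * (t / b0) + u = t := Nat.div_add_mod t b0
    rw [← hxq] at hdm
    have hx : x * b0 + u * a0 = t := by
      rw [hab0, ← hdm]; ring
    rw [← hx]
    exact zrep_add (zrep_nsmul hb0 x) (zrep_nsmul ha0 u)

set_option maxHeartbeats 2000000 in
lemma za_window_pos
    (k : ℕ) (hk : 1 ≤ k) (c : ℕ → ℕ) (hck : 0 < c k)
    (hgcd : Finset.gcd ((Finset.Icc 1 k).filter fun m => c m ≠ 0) id = 1)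
    (r : ℝ) (hr : 0 < r)
    (hsum1 : ∑ i ∈ Finset.Icc 1 k, (c i : ℝ) / r ^ i = 1)
    (m : ℕ) (hm : 1 ≤ m) (γ : ℕ → ℝ)
    (hΓ : 0 < ∑ i ∈ Finset.Icc 1 m, γ i * r ^ (m - i))
    (g : ℕ → ℝ)
    (hgdef : ∀ s, g s = if k ≤ s ∧ s < k + m then γ (s - k + 1) else 0)
    (M : ℕ) :
    ∃ n, M ≤ n ∧ ∀ j, n + 1 - k ≤ j → j ≤ n → 0 < zaSeq k c g j := by
  classical
  have hrne : r ≠ 0 := ne_of_gt hr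
  set a : ℕ → ℝ := zaSeq k c g with ha
  set b : ℕ → ℝ := fun n => a n / r ^ n with hb
  set d : ℕ → ℝ := fun i => (c i : ℝ) / r ^ i with hd
  have hg0 : ∀ s < k, g s = 0 := by
    intro s hs; rw [hgdef]; rw [if_neg (by omega)]
  have hgK : ∀ s, k + m ≤ s → g s = 0 := by
    intro s hs; rw [hgdef]; rw [if_neg (by omega)]
  have hd0 : ∀ i, 0 ≤ d i := by
    intro i; apply div_nonneg (Nat.cast_nonneg _) (le_of_lt (pow_pos hr _))
  have hd1 : ∑ i ∈ Finset.Icc 1 k, d i = 1 := hsum1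
  have hdle1 : ∀ i ∈ Finset.Icc 1 k, d i ≤ 1 := by
    intro i hi
    rw [← hd1]
    exact Finset.single_le_sum (fun j _ => hd0 j) hi
  have hblow : ∀ n < k, b n = 0 := by
    intro n hn
    simp only [hb, ha]
    rw [zaSeq_low k c g hg0 n hn, zero_div]
  have hbrecg : ∀ n, k ≤ n → b n = g n / r ^ n + ∑ i ∈ Finset.Icc 1 k, d i * b (n - i) := by
    intro n hn
    simp only [hb, ha, hd]
    rw [zaSeq_rec k c g n hn, add_div, Finset.sum_div]
    congr 1
    apply Finset.sum_congr rfl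
    intro i hi
    rw [Finset.mem_Icc] at hi
    have hsplit : r ^ n = r ^ i * r ^ (n - i) := by rw [← pow_add]; congr 1; omega
    rw [hsplit]
    field_simp
    try ring
  have hbrec : ∀ n, k + m ≤ n → b n = ∑ i ∈ Finset.Icc 1 k, d i * b (n - i) := by
    intro n hn
    rw [hbrecg n (by omega), hgK n hn, zero_div, zero_add]
  -- the conserved quantity
  set V : ℕ → ℝ := fun n => ∑ i ∈ Finset.Icc 1 k, d i * ∑ j ∈ Finset.range i, b (n - j)
    with hV
  have hVstep : ∀ n, k ≤ n + 1 → V (n + 1) = V n + g (n + 1) / r ^ (n + 1) := by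
    intro n hn
    have key : ∀ i ∈ Finset.Icc 1 k,
        ∑ j ∈ Finset.range i, b (n + 1 - j)
          = (∑ j ∈ Finset.range i, b (n - j)) + b (n + 1) - b (n + 1 - i) := by
      intro i hi
      have h1 := Finset.sum_range_succ' (fun j => b (n + 1 - j)) i
      have h2 := Finset.sum_range_succ (fun j => b (n + 1 - j)) i
      have h3 : ∀ j : ℕ, n + 1 - (j + 1) = n - j := fun j => by omega
      simp only [h3, Nat.sub_zero] at h1
      linarith [h1, h2]
    have e1 : V (n + 1) = ∑ i ∈ Finset.Icc 1 k,
        (d i * (∑ j ∈ Finset.range i, b (n - j)) + d i * b (n + 1) - d i * b (n + 1 - i)) := by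
      simp only [hV]
      apply Finset.sum_congr rfl
      intro i hi
      rw [key i hi]; ring
    rw [e1, Finset.sum_sub_distrib, Finset.sum_add_distrib, ← Finset.sum_mul, hd1, one_mul]
    have e2 : b (n + 1) = g (n + 1) / r ^ (n + 1) + ∑ i ∈ Finset.Icc 1 k, d i * b (n + 1 - i) :=
      hbrecg (n + 1) hn
    simp only [hV]
    linarith [e2]
  have hVlow : V (k - 1) = 0 := by
    simp only [hV]
    apply Finset.sum_eq_zero
    intro i hi
    rw [Finset.mem_Icc] at hi
    have : ∑ j ∈ Finset.range i, b (k - 1 - j) = 0 := by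
      apply Finset.sum_eq_zero
      intro j hj
      exact hblow _ (by omega)
    rw [this, mul_zero]
  have hVval : ∀ n, k - 1 ≤ n → V n = ∑ s ∈ Finset.Icc k n, g s / r ^ s := by
    intro n hn
    induction n, hn using Nat.le_induction with
    | base => rw [hVlow, Finset.Icc_eq_empty (by omega), Finset.sum_empty]
    | succ n hn ih =>
      rw [hVstep n (by omega), ih, Finset.sum_Icc_succ_top (by omega : k ≤ n + 1)]
  set VΓ : ℝ := ∑ s ∈ Finset.Icc k (k + m - 1), g s / r ^ s with hVΓ
  have hVconst : ∀ n, k + m - 1 ≤ n → V n = VΓ := by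
    intro n hn
    rw [hVval n (by omega), hVΓ]
    symm
    apply Finset.sum_subset
    · apply Finset.Icc_subset_Icc_right; omega
    · intro s hs1 hs2
      rw [Finset.mem_Icc] at hs1 hs2
      rw [hgK s (by omega), zero_div]
  have hVΓeq : VΓ * r ^ (k + m - 1) = ∑ i ∈ Finset.Icc 1 m, γ i * r ^ (m - i) := by
    rw [hVΓ, Finset.sum_mul]
    apply Finset.sum_nbij' (fun s => s - k + 1) (fun i => i + k - 1)
    · intro s hs
      rw [Finset.mem_Icc] at hs ⊢
      omega
    · intro i hi
      rw [Finset.mem_Icc] at hi ⊢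
      omega
    · intro s hs
      rw [Finset.mem_Icc] at hs
      omega
    · intro i hi
      rw [Finset.mem_Icc] at hi
      omega
    · intro s hs
      rw [Finset.mem_Icc] at hs
      rw [hgdef s, if_pos (by omega)]
      have h1 : m - (s - k + 1) = k + m - 1 - s := by omega
      have h2 : r ^ (k + m - 1) = r ^ s * r ^ (k + m - 1 - s) := by rw [← pow_add]; congr 1; omega
      rw [h1, h2]
      have hrs : (r : ℝ) ^ s ≠ 0 := pow_ne_zero _ hrne
      field_simp
      try ring
  have hVΓpos : 0 < VΓ := by
    have hrp : 0 < r ^ (k + m - 1) := pow_pos hr _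
    nlinarith [hVΓeq, hΓ]
  -- window minimum
  have hne : ∀ n : ℕ, (Finset.Icc (n + 1 - k) n).Nonempty :=
    fun n => Finset.nonempty_Icc.2 (by omega)
  set mw : ℕ → ℝ := fun n => (Finset.Icc (n + 1 - k) n).inf' (hne n) b with hmw
  have hmwle : ∀ n j, n + 1 - k ≤ j → j ≤ n → mw n ≤ b j := by
    intro n j h1 h2
    exact Finset.inf'_le b (Finset.mem_Icc.2 ⟨h1, h2⟩)
  set K := k + m with hK
  have hmono : ∀ n, K ≤ n + 1 → mw n ≤ mw (n + 1) := by
    intro n hn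
    apply Finset.le_inf'
    intro x hx
    rw [Finset.mem_Icc] at hx
    rcases Nat.lt_or_ge x (n + 1) with h | h
    · exact hmwle n x (by omega) (by omega)
    · have hx1 : x = n + 1 := by omega
      subst hx1
      rw [hbrec (n + 1) hn]
      have h5 : ∑ i ∈ Finset.Icc 1 k, d i * mw n ≤ ∑ i ∈ Finset.Icc 1 k, d i * b (n + 1 - i) := by
        apply Finset.sum_le_sum
        intro i hi
        rw [Finset.mem_Icc] at hi
        exact mul_le_mul_of_nonneg_left (hmwle n (n + 1 - i) (by omega) (by omega)) (hd0 i)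
      calc mw n = ∑ i ∈ Finset.Icc 1 k, d i * mw n := by rw [← Finset.sum_mul, hd1, one_mul]
        _ ≤ _ := h5
  have hmono' : ∀ n n', K ≤ n → n ≤ n' → mw n ≤ mw n' := by
    intro n n' hn hnn
    induction n', hnn using Nat.le_induction with
    | base => exact le_refl _
    | succ p hp ih => exact ih.trans (hmono p (by omega))
  -- it suffices to find one strictly positive window minimum
  suffices hsuf : ∃ n, K ≤ n ∧ 0 < mw n by
    obtain ⟨n, hn, hpos⟩ := hsuf
    refine ⟨max n M, le_max_right _ _, ?_⟩
    intro j hj1 hj2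
    have h1 : mw n ≤ mw (max n M) := hmono' n (max n M) hn (le_max_left _ _)
    have h2 : mw (max n M) ≤ b j := hmwle _ j hj1 hj2
    have hbj : 0 < b j := lt_of_lt_of_le hpos (h1.trans h2)
    have : b j = a j / r ^ j := rfl
    rw [this] at hbj
    have hrj : 0 < r ^ j := pow_pos hr _
    exact (div_pos_iff.1 hbj).resolve_right (by rintro ⟨_, h⟩; linarith) |>.1
  by_contra h0
  push_neg at h0
  have h0' : ∀ n, K ≤ n → mw n ≤ 0 := fun n hn => h0 n hn
  -- supremum of window minima
  set SetR : Set ℝ := Set.range fun t => mw (K + t) with hSetR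
  have hSne : SetR.Nonempty := ⟨mw (K + 0), ⟨0, rfl⟩⟩
  have hSbdd : BddAbove SetR := by
    refine ⟨0, ?_⟩
    rintro x ⟨t, rfl⟩
    exact h0' (K + t) (by omega)
  set μ : ℝ := sSup SetR with hμ
  have hμub : ∀ n, K ≤ n → mw n ≤ μ := by
    intro n hn
    have : mw (K + (n - K)) ≤ μ := le_csSup hSbdd ⟨n - K, rfl⟩
    rwa [show K + (n - K) = n from by omega] at this
  have hμ0 : μ ≤ 0 := csSup_le hSne (by rintro x ⟨t, rfl⟩; exact h0' (K + t) (by omega))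
  -- support set and Frobenius number
  set Sf : Finset ℕ := (Finset.Icc 1 k).filter (fun i => c i ≠ 0) with hSf
  have hkS : k ∈ Sf := by
    rw [hSf, Finset.mem_filter, Finset.mem_Icc]
    exact ⟨⟨hk, le_refl k⟩, by omega⟩
  have hSsub : ∀ i ∈ Sf, 1 ≤ i ∧ i ≤ k := by
    intro i hi
    rw [hSf, Finset.mem_filter, Finset.mem_Icc] at hi
    exact hi.1
  have hScpos : ∀ i ∈ Sf, 0 < c i := by
    intro i hi
    rw [hSf, Finset.mem_filter] at hi
    omega
  have hdS : ∀ i ∈ Sf, 0 < d i := by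
    intro i hi
    have := hScpos i hi
    apply div_pos (by exact_mod_cast this) (pow_pos hr _)
  set dm : ℝ := Sf.inf' ⟨k, hkS⟩ d with hdm
  have hdmpos : 0 < dm := by
    rw [hdm]; refine (Finset.lt_inf'_iff _).2 ?_
    exact fun i hi => hdS i hi
  have hdmle : ∀ i ∈ Sf, dm ≤ d i := fun i hi => Finset.inf'_le d hi
  have hdm1 : dm ≤ 1 := by
    have h1 : dm ≤ d k := hdmle k hkS
    have h2 : d k ≤ 1 := hdle1 k (Finset.mem_Icc.2 ⟨hk, le_refl k⟩)
    linarith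
  set q : ℝ := 2 / dm with hq
  have hq1 : 1 ≤ q := by
    rw [hq]
    rw [le_div_iff₀ hdmpos]
    linarith
  have hq0 : 0 < q := by linarith
  obtain ⟨F, hF⟩ := exists_frobenius Sf ⟨k, hkS⟩ (fun s hs => (hSsub s hs).1) hgcd
  set C : ℝ := q ^ (F + k) with hC
  have hC0 : 0 < C := pow_pos hq0 _
  set W : ℝ := ∑ i ∈ Finset.Icc 1 k, d i * (i : ℝ) with hW
  have hW0 : 0 ≤ W := Finset.sum_nonneg fun i _ => mul_nonneg (hd0 i) (Nat.cast_nonneg _)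
  set δ : ℝ := VΓ / (2 * (W * C + 1)) with hδdef
  have hWC1 : (0:ℝ) < W * C + 1 := by nlinarith [mul_nonneg hW0 hC0.le]
  have hδ : 0 < δ := div_pos hVΓpos (by linarith)
  -- lower bound threshold
  obtain ⟨x0, hx0mem, hx0gt⟩ := exists_lt_of_lt_csSup hSne (show μ - δ < μ by linarith)
  obtain ⟨t0, rfl⟩ := hx0mem
  set n₀ : ℕ := K + t0 with hn₀
  have hlow : ∀ j, n₀ ≤ j → μ - δ < b j := by
    intro j hj
    have h1 : mw n₀ ≤ mw j := hmono' n₀ j (by omega) hj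
    have h2 : mw j ≤ b j := hmwle j j (by omega) (le_refl j)
    linarith
  -- find a far index where b is at most μ
  set n₁ : ℕ := n₀ + F + 3 * k + K with hn₁
  obtain ⟨N, hNmem, hNeq⟩ := Finset.exists_mem_eq_inf' (hne n₁) b
  rw [Finset.mem_Icc] at hNmem
  have hbN : b N ≤ μ := by
    rw [← hNeq]
    exact hμub n₁ (by omega)
  have hNbig : n₀ + F + 2 * k + K ≤ N := by omega
  -- propagation of upper bounds along the support semigroup
  have hprop : ∀ l : List ℕ, (∀ x ∈ l, x ∈ Sf) → l.sum ≤ F + k →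
      b (N - l.sum) ≤ μ + δ * q ^ l.sum := by
    intro l
    induction l with
    | nil =>
      intro _ _
      simp only [List.sum_nil, Nat.sub_zero, pow_zero, mul_one]
      linarith
    | cons i l ih =>
      intro hmem hsum
      have hi : i ∈ Sf := hmem i List.mem_cons_self
      have hiIcc : 1 ≤ i ∧ i ≤ k := hSsub i hi
      have hts : (i :: l).sum = i + l.sum := List.sum_cons
      have hsum' : l.sum ≤ F + k := by omega
      have iht : b (N - l.sum) ≤ μ + δ * q ^ l.sum :=
        ih (fun x hx => hmem x (List.mem_cons_of_mem i hx)) hsum'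
      set t := l.sum with hts2
      have hrec := hbrec (N - t) (by omega)
      have hiIcc' : i ∈ Finset.Icc 1 k := Finset.mem_Icc.2 hiIcc
      have hsplit : d i * b (N - t - i) + ∑ i' ∈ (Finset.Icc 1 k).erase i, d i' * b (N - t - i')
          = ∑ i' ∈ Finset.Icc 1 k, d i' * b (N - t - i') :=
        Finset.add_sum_erase _ (fun i' => d i' * b (N - t - i')) hiIcc'
      have herased : ∑ i' ∈ (Finset.Icc 1 k).erase i, d i' = 1 - d i := by
        rw [Finset.sum_erase_eq_sub hiIcc', hd1]
      have hsum_lb : (1 - d i) * (μ - δ) ≤ ∑ i' ∈ (Finset.Icc 1 k).erase i, d i' * b (N - t - i') := by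
        rw [← herased, Finset.sum_mul]
        apply Finset.sum_le_sum
        intro i' hi'
        have hi'Icc : 1 ≤ i' ∧ i' ≤ k := by
          have := Finset.mem_of_mem_erase hi'
          rw [Finset.mem_Icc] at this
          exact this
        have hidx : n₀ ≤ N - t - i' := by omega
        exact mul_le_mul_of_nonneg_left (hlow _ hidx).le (hd0 i')
      have h1 : d i * b (N - t - i) ≤ μ + δ * q ^ t - (1 - d i) * (μ - δ) := by
        have e : b (N - t) = d i * b (N - t - i)
            + ∑ i' ∈ (Finset.Icc 1 k).erase i, d i' * b (N - t - i') := by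
          rw [hsplit, ← hrec]
        linarith
      have hdi : 0 < d i := hdS i hi
      have h2 : d i * b (N - t - i) ≤ d i * (μ + δ * q ^ (i + t)) := by
        apply h1.trans
        have e1 : dm ≤ d i := hdmle i hi
        have e2 : d i ≤ 1 := hdle1 i hiIcc'
        have e3 : (1:ℝ) ≤ q ^ t := one_le_pow₀ hq1
        have e4 : q ^ (t+1) ≤ q ^ (i + t) := pow_le_pow_right₀ hq1 (by omega)
        have e5 : q ^ (t+1) = q * q ^ t := by rw [pow_succ]; ring
        have e6 : dm * q = 2 := by rw [hq]; field_simp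
        have e7 : 0 < q ^ t := pow_pos hq0 t
        have e8 : 0 < q ^ (i + t) := pow_pos hq0 _
        have e9 : dm * (δ * q ^ (t + 1)) = 2 * (δ * q ^ t) := by
          rw [e5]; linear_combination (δ * q ^ t) * e6
        nlinarith [mul_nonneg (sub_nonneg.2 e1) (mul_nonneg hδ.le e8.le),
          mul_nonneg hdmpos.le (mul_nonneg hδ.le (sub_nonneg.2 e4)),
          mul_nonneg hδ.le (sub_nonneg.2 e3), e9,
          mul_nonneg hδ.le hdi.le]
      have h3 : b (N - t - i) ≤ μ + δ * q ^ (i + t) := le_of_mul_le_mul_left h2 hdi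
      rw [hts]
      rwa [show N - (i + t) = N - t - i from by omega]
  -- the window of k consecutive small values
  have hwin : ∀ j, N - F - k + 1 ≤ j → j ≤ N - F → b j ≤ μ + δ * C := by
    intro j hj1 hj2
    set t := N - j with ht
    have htF : F ≤ t ∧ t ≤ F + k - 1 := by omega
    obtain ⟨l, hl, hlsum⟩ := hF t htF.1
    have hbound := hprop l hl (by omega)
    rw [hlsum] at hbound
    rw [show N - t = j from by omega] at hbound
    apply hbound.trans
    have hqC : q ^ t ≤ C := by
      rw [hC]
      exact pow_le_pow_right₀ hq1 (by omega)
    nlinarith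
  -- contradiction via the conserved quantity
  have hVle : V (N - F) ≤ W * (μ + δ * C) := by
    have e1 : V (N - F) = ∑ i ∈ Finset.Icc 1 k, d i * ∑ j ∈ Finset.range i, b (N - F - j) := rfl
    rw [e1]
    have e2 : ∀ i ∈ Finset.Icc 1 k,
        d i * ∑ j ∈ Finset.range i, b (N - F - j) ≤ d i * ((i:ℝ) * (μ + δ * C)) := by
      intro i hi
      rw [Finset.mem_Icc] at hi
      apply mul_le_mul_of_nonneg_left _ (hd0 i)
      have := Finset.sum_le_card_nsmul (Finset.range i) (fun j => b (N - F - j)) (μ + δ * C)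
        (by intro j hj
            rw [Finset.mem_range] at hj
            exact hwin (N - F - j) (by omega) (by omega))
      rw [Finset.card_range] at this
      rwa [nsmul_eq_mul] at this
    calc ∑ i ∈ Finset.Icc 1 k, d i * ∑ j ∈ Finset.range i, b (N - F - j)
        ≤ ∑ i ∈ Finset.Icc 1 k, d i * ((i:ℝ) * (μ + δ * C)) := Finset.sum_le_sum e2
      _ = W * (μ + δ * C) := by
          rw [hW, Finset.sum_mul]
          apply Finset.sum_congr rfl
          intro i _
          ring
  have hVNF : V (N - F) = VΓ := hVconst (N - F) (by omega)
  have hfinal : VΓ ≤ W * (μ + δ * C) := by rw [← hVNF]; exact hVle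
  have hδeq : δ * (2 * (W * C + 1)) = VΓ := by
    rw [hδdef]
    field_simp
  nlinarith [mul_nonneg hW0 (mul_nonneg hδ.le hC0.le), mul_nonneg hW0 hC0.le,
    mul_nonpos_of_nonneg_of_nonpos hW0 hμ0]

set_option maxHeartbeats 1000000 in
theorem zeroing_algorithm_divisibility
    (k : ℕ) (hk : 1 ≤ k) (c : ℕ → ℕ) (hck : 0 < c k)
    (hgcd : Finset.gcd ((Finset.Icc 1 k).filter fun m => c m ≠ 0) id = 1)
    (P : Polynomial ℝ)
    (hP : P = X ^ k - ∑ i ∈ Finset.Icc 1 k, C (c i : ℝ) * X ^ (k - i))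
    (r : ℝ) (hr : 0 < r) (hroot : P.IsRoot r)
    (m : ℕ) (hm : 1 ≤ m) (γ : ℕ → ℝ)
    (hΓ : 0 < ∑ i ∈ Finset.Icc 1 m, γ i * r ^ (m - i)) :
    ∃ p : Polynomial ℝ, ∃ N : ℕ, m - 1 ≤ N ∧ P ∣ p ∧
      (∀ i, 1 ≤ i → i ≤ m → p.coeff (N + 1 - i) = γ i) ∧
      (∀ j, j + m ≤ N → p.coeff j ≤ 0) ∧
      (∀ j, N < j → p.coeff j = 0) := by
  classical
  have hrne : r ≠ 0 := ne_of_gt hr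
  -- the root identity
  have hev : P.eval r = 0 := hroot
  rw [hP] at hev
  simp only [eval_sub, eval_pow, eval_X, eval_finset_sum, eval_mul, eval_C] at hev
  have hsumk : ∑ i ∈ Finset.Icc 1 k, (c i : ℝ) * r ^ (k - i) = r ^ k := by linarith
  have hsum1 : ∑ i ∈ Finset.Icc 1 k, (c i : ℝ) / r ^ i = 1 := by
    have step : ∀ i ∈ Finset.Icc 1 k, (c i : ℝ) / r ^ i = ((c i : ℝ) * r ^ (k - i)) / r ^ k := by
      intro i hi
      rw [Finset.mem_Icc] at hi
      rw [div_eq_div_iff (pow_ne_zero _ hrne) (pow_ne_zero _ hrne), mul_assoc, ← pow_add]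
      congr 2
      omega
    rw [Finset.sum_congr rfl step, ← Finset.sum_div, hsumk, div_self (pow_ne_zero _ hrne)]
  -- the driving sequence
  set g : ℕ → ℝ := fun s => if k ≤ s ∧ s < k + m then γ (s - k + 1) else 0 with hgdef0
  have hgdef : ∀ s, g s = if k ≤ s ∧ s < k + m then γ (s - k + 1) else 0 := fun s => rfl
  have hg0 : ∀ s < k, g s = 0 := by intro s hs; rw [hgdef, if_neg (by omega)]
  set a : ℕ → ℝ := zaSeq k c g with ha
  obtain ⟨n, hn, hwin⟩ := za_window_pos k hk c hck hgcd r hr hsum1 m hm γ hΓ g hgdef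
    (2 * k + m + 2)
  set T : ℕ := n - k with hT
  have hnT : n = T + k := by omega
  have hTm : m + k + 1 ≤ T := by omega
  set N : ℕ := T + k with hN
  -- the polynomial
  set q : Polynomial ℝ := ∑ t ∈ Finset.range (T + 1), C (a (t + k)) * X ^ (T - t) with hq
  set p : Polynomial ℝ := ∑ t ∈ Finset.range (T + 1), C (a (t + k)) * X ^ (T - t) * P with hp
  have hdvd : P ∣ p := by
    refine ⟨q, ?_⟩
    rw [Finset.mul_sum]
    apply Finset.sum_congr rfl
    intro t _
    ring
  -- coefficients of P
  have hPc : ∀ u, P.coeff u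
      = (if u = k then (1 : ℝ) else 0) - (if u < k then (c (k - u) : ℝ) else 0) := by
    intro u
    rw [hP, coeff_sub, coeff_X_pow, finset_sum_coeff]
    congr 1
    have step : ∀ i ∈ Finset.Icc 1 k,
        (C (c i : ℝ) * X ^ (k - i)).coeff u = (c i : ℝ) * (if u = k - i then 1 else 0) := by
      intro i _
      rw [coeff_C_mul, coeff_X_pow]
    rw [Finset.sum_congr rfl step]
    by_cases hu : u < k
    · rw [if_pos hu, Finset.sum_eq_single (k - u)]
      · rw [if_pos (by omega), mul_one]
      · intro i hi hne
        rw [Finset.mem_Icc] at hi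
        rw [if_neg (by omega), mul_zero]
      · intro h
        exact absurd (Finset.mem_Icc.2 ⟨by omega, by omega⟩) h
    · rw [if_neg hu]
      apply Finset.sum_eq_zero
      intro i hi
      rw [Finset.mem_Icc] at hi
      rw [if_neg (by omega), mul_zero]
  -- coefficients of p
  have hpcoeff : ∀ j, p.coeff j = ∑ t ∈ Finset.range (T + 1),
      a (t + k) * (if T - t ≤ j then P.coeff (j - (T - t)) else 0) := by
    intro j
    rw [hp, finset_sum_coeff]
    apply Finset.sum_congr rfl
    intro t _
    have e : C (a (t + k)) * X ^ (T - t) * P = C (a (t + k)) * (P * X ^ (T - t)) := by ring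
    rw [e, coeff_C_mul, coeff_mul_X_pow']
  -- the main coefficient formula
  have hA : ∀ s, s ≤ T → p.coeff (N - s) = g (s + k) := by
    intro s hs
    rw [hpcoeff]
    have step : ∀ t ∈ Finset.range (T + 1),
        a (t + k) * (if T - t ≤ N - s then P.coeff ((N - s) - (T - t)) else 0)
          = (if t = s then a (s + k) else 0)
            - (if t ∈ Finset.Ico (s - k) s then (c (s - t) : ℝ) * a (t + k) else 0) := by
      intro t ht
      rw [Finset.mem_range] at ht
      rcases Nat.lt_trichotomy t s with h1 | h1 | h1
      · by_cases h2 : s ≤ t + k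
        · rw [if_pos (show T - t ≤ N - s from by omega),
            show (N - s) - (T - t) = k - (s - t) from by omega, hPc,
            if_neg (show ¬(k - (s - t) = k) from by omega),
            if_pos (show k - (s - t) < k from by omega),
            show k - (k - (s - t)) = s - t from by omega,
            if_neg (show ¬(t = s) from by omega),
            if_pos (Finset.mem_Ico.mpr ⟨by omega, by omega⟩)]
          ring
        · rw [if_neg (show ¬(T - t ≤ N - s) from by omega),
            if_neg (show ¬(t = s) from by omega),
            if_neg (show t ∉ Finset.Ico (s - k) s from by rw [Finset.mem_Ico]; omega),
            mul_zero, sub_zero]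
      · subst h1
        rw [if_pos (show T - t ≤ N - t from by omega),
          show (N - t) - (T - t) = k from by omega, hPc,
          if_pos rfl, if_neg (lt_irrefl k), if_pos rfl,
          if_neg (show t ∉ Finset.Ico (t - k) t from by rw [Finset.mem_Ico]; omega)]
        ring
      · rw [if_pos (show T - t ≤ N - s from by omega), hPc,
          if_neg (show ¬((N - s) - (T - t) = k) from by omega),
          if_neg (show ¬((N - s) - (T - t) < k) from by omega),
          if_neg (show ¬(t = s) from by omega),
          if_neg (show t ∉ Finset.Ico (s - k) s from by rw [Finset.mem_Ico]; omega)]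
        ring
    rw [Finset.sum_congr rfl step, Finset.sum_sub_distrib]
    have e1 : ∑ t ∈ Finset.range (T + 1), (if t = s then a (s + k) else 0) = a (s + k) := by
      rw [Finset.sum_ite_eq' (Finset.range (T + 1)) s (fun _ => a (s + k)),
        if_pos (Finset.mem_range.2 (by omega))]
    have e2 : ∑ t ∈ Finset.range (T + 1),
        (if t ∈ Finset.Ico (s - k) s then (c (s - t) : ℝ) * a (t + k) else 0)
          = ∑ i ∈ Finset.Icc 1 k, (c i : ℝ) * a (s + k - i) := by
      rw [Finset.sum_ite_mem, Finset.inter_eq_right.2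
        (by intro x hx; rw [Finset.mem_Ico] at hx; exact Finset.mem_range.2 (by omega))]
      rw [show (Finset.Icc 1 k) = Finset.Icc 1 k from rfl]
      symm
      have drop : ∑ i ∈ Finset.Icc 1 k, (c i : ℝ) * a (s + k - i)
          = ∑ i ∈ Finset.Icc 1 (min k s), (c i : ℝ) * a (s + k - i) := by
        symm
        apply Finset.sum_subset
        · apply Finset.Icc_subset_Icc_right; omega
        · intro i hi1 hi2
          rw [Finset.mem_Icc] at hi1 hi2
          rw [ha, zaSeq_low k c g hg0 (s + k - i) (by omega), mul_zero]
      rw [drop]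
      apply Finset.sum_nbij' (fun i => s - i) (fun t => s - t)
      · intro i hi
        rw [Finset.mem_Icc] at hi
        rw [Finset.mem_Ico]
        omega
      · intro t ht
        rw [Finset.mem_Ico] at ht
        rw [Finset.mem_Icc]
        omega
      · intro i hi
        rw [Finset.mem_Icc] at hi
        omega
      · intro t ht
        rw [Finset.mem_Ico] at ht
        omega
      · intro i hi
        rw [Finset.mem_Icc] at hi
        rw [show s - (s - i) = i from by omega, show s - i + k = s + k - i from by omega]
    rw [e1, e2]
    have hrec := zaSeq_rec k c g (s + k) (by omega)
    rw [← ha] at hrec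
    linarith
  -- final assembly
  refine ⟨p, N, by omega, hdvd, ?_, ?_, ?_⟩
  · intro i hi1 hi2
    have e : N + 1 - i = N - (i - 1) := by omega
    rw [e, hA (i - 1) (by omega), hgdef, if_pos (by omega)]
    congr 1
    omega
  · intro j hj
    by_cases hjk : k ≤ j
    · have e := hA (N - j) (by omega)
      rw [show N - (N - j) = j from by omega] at e
      rw [e, hgdef, if_neg (by omega)]
    · rw [hpcoeff]
      apply Finset.sum_nonpos
      intro t ht
      rw [Finset.mem_range] at ht
      by_cases hg1 : T - t ≤ j
      · rw [if_pos hg1, hPc, if_neg (by omega), if_pos (by omega)]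
        apply mul_nonpos_of_nonneg_of_nonpos
        · exact (hwin (t + k) (by omega) (by omega)).le
        · simp only [zero_sub, neg_nonpos]
          exact Nat.cast_nonneg _
      · rw [if_neg hg1, mul_zero]
  · intro j hj
    rw [hpcoeff]
    apply Finset.sum_eq_zero
    intro t ht
    rw [Finset.mem_range] at ht
    rw [if_pos (by omega), hPc, if_neg (by omega), if_neg (by omega), sub_zero, mul_zero]
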